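/- Let H be a graph with χ(H) > 2 and 𝓗 the family of graphs obtained from H by deleting a color class. Let G be a graph whose vertex set is M ∪ {u, v} with |M| = l, such that G[M] is 𝓗-free and G is H-free. Let 𝓗' be the family of graphs obtained from H by deleting two adjacent vertices, and suppose every extremal 𝓗-free graph on l vertices contains a member of 𝓗'. Then e(G) ≤ ex(l, 𝓗) + 2l. -/

import Mathlib

open SimpleGraph

/-- `H` has a copy in `G`, i.e. `G` contains `H` as a (not necessarily induced) subgraph. -/
def CopyIn {α β : Type*} (H : SimpleGraph α) (G : SimpleGraph β) : Prop :=
  ∃ f : α ↪ β, ∀ a b, H.Adj a b → G.Adj (f a) (f b)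

/-- The join `G ∨ H` of two graphs: disjoint union plus all edges in between. -/
def graphJoin {α β : Type*} (G : SimpleGraph α) (H : SimpleGraph β) : SimpleGraph (α ⊕ β) where
  Adj x y := (∃ a b, x = Sum.inl a ∧ y = Sum.inl b ∧ G.Adj a b) ∨
    (∃ a b, x = Sum.inr a ∧ y = Sum.inr b ∧ H.Adj a b) ∨
    (x.isLeft ∧ y.isRight) ∨ (x.isRight ∧ y.isLeft)
  symm := by
    refine ⟨?_⟩
    rintro x y (⟨a, b, rfl, rfl, h⟩ | ⟨a, b, rfl, rfl, h⟩ | ⟨h1, h2⟩ | ⟨h1, h2⟩)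
    · exact Or.inl ⟨b, a, rfl, rfl, h.symm⟩
    · exact Or.inr (Or.inl ⟨b, a, rfl, rfl, h.symm⟩)
    · exact Or.inr (Or.inr (Or.inr ⟨h2, h1⟩))
    · exact Or.inr (Or.inr (Or.inl ⟨h2, h1⟩))
  loopless := by
    refine ⟨?_⟩
    rintro x (⟨a, b, rfl, heq, h⟩ | ⟨a, b, rfl, heq, h⟩ | ⟨h1, h2⟩ | ⟨h1, h2⟩)
    · cases heq; exact h.ne rfl
    · cases heq; exact h.ne rfl
    · cases x <;> simp_all
    · cases x <;> simp_all

/-- A matching with `t` edges. -/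
def matchingGraph (t : ℕ) : SimpleGraph (Fin t × Fin 2) :=
  SimpleGraph.fromRel (fun p q => p.1 = q.1)

/-- The star with `t` edges. -/
def starGraph (t : ℕ) : SimpleGraph (Fin 1 ⊕ Fin t) := completeBipartiteGraph (Fin 1) (Fin t)

/-- Turán number of a single forbidden graph. -/
noncomputable def exNum1 {α : Type*} (n : ℕ) (A : SimpleGraph α) : ℕ :=
  sSup {e | ∃ G : SimpleGraph (Fin n), ¬ CopyIn A G ∧ e = G.edgeSet.ncard}

/-- Turán number of two forbidden graphs. -/
noncomputable def exNum2 {α β : Type*} (n : ℕ) (A : SimpleGraph α) (B : SimpleGraph β) : ℕ :=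
  sSup {e | ∃ G : SimpleGraph (Fin n),
    ¬ CopyIn A G ∧ ¬ CopyIn B G ∧ e = G.edgeSet.ncard}

/-- Connected Turán number of two forbidden graphs. -/
noncomputable def exConn2 {α β : Type*} (n : ℕ) (A : SimpleGraph α) (B : SimpleGraph β) : ℕ :=
  sSup {e | ∃ G : SimpleGraph (Fin n),
    G.Connected ∧ ¬ CopyIn A G ∧ ¬ CopyIn B G ∧ e = G.edgeSet.ncard}

/-- Turán number of a family of forbidden graphs. -/
noncomputable def exNumFam (n : ℕ) (F : Set (Σ V : Type, SimpleGraph V)) : ℕ :=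
  sSup {e | ∃ G : SimpleGraph (Fin n),
    (∀ M ∈ F, ¬ CopyIn M.2 G) ∧ e = G.edgeSet.ncard}

/-- The family of graphs obtained from `H` by deleting one color class of a proper coloring
of `H` with `χ(H)` colors. -/
def delClassFam {W : Type} (H : SimpleGraph W) : Set (Σ V : Type, SimpleGraph V) :=
  {M | ∃ (m : ℕ) (C : H.Coloring (Fin m)) (c : Fin m),
    H.chromaticNumber = (m : ℕ∞) ∧
    M = ⟨{v : W | C v ≠ c}, H.induce {v : W | C v ≠ c}⟩}

/-- The family of graphs obtained from `H` by deleting two adjacent vertices. -/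
def delPairFam {W : Type} (H : SimpleGraph W) : Set (Σ V : Type, SimpleGraph V) :=
  {M | ∃ u v : W, H.Adj u v ∧
    M = ⟨{x : W | x ≠ u ∧ x ≠ v}, H.induce {x : W | x ≠ u ∧ x ≠ v}⟩}

lemma copyIn_of_iso {α β γ : Type*} {A : SimpleGraph α} {G1 : SimpleGraph β} {G2 : SimpleGraph γ}
    (φ : G1 ≃g G2) (h : CopyIn A G1) : CopyIn A G2 := by
  obtain ⟨f, hf⟩ := h
  exact ⟨f.trans φ.toEmbedding.toEmbedding, fun a b hab => φ.map_rel_iff.mpr (hf a b hab)⟩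

lemma copyIn_of_induce {α V : Type*} {A : SimpleGraph α} {G : SimpleGraph V} {s : Set V}
    (h : CopyIn A (G.induce s)) : CopyIn A G := by
  obtain ⟨f, hf⟩ := h
  exact ⟨f.trans (Function.Embedding.subtype _), fun a b hab => hf a b hab⟩

lemma bddAbove_exNumFam_set (n : ℕ) (F : Set (Σ V : Type, SimpleGraph V)) :
    BddAbove {e | ∃ G : SimpleGraph (Fin n),
      (∀ M ∈ F, ¬ CopyIn M.2 G) ∧ e = G.edgeSet.ncard} := by
  refine ⟨(Set.univ : Set (Sym2 (Fin n))).ncard, ?_⟩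
  rintro e ⟨G, -, rfl⟩
  exact Set.ncard_le_ncard (Set.subset_univ _) Set.finite_univ

theorem lemma_two_extra_vertices {W : Type} [Fintype W] (H : SimpleGraph W)
    (hχ : 2 < H.chromaticNumber)
    {V : Type*} [Fintype V] (G : SimpleGraph V) (M : Set V) (u v : V) (l : ℕ)
    (hMl : M.ncard = l) (hu : u ∉ M) (hv : v ∉ M) (huv : u ≠ v)
    (hV : (Set.univ : Set V) = M ∪ {u, v})
    (hGM : ∀ F ∈ delClassFam H, ¬ CopyIn F.2 (G.induce M))
    (hGH : ¬ CopyIn H G)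
    (hext : ∀ T : SimpleGraph (Fin l),
      (∀ F ∈ delClassFam H, ¬ CopyIn F.2 T) →
      T.edgeSet.ncard = exNumFam l (delClassFam H) →
      ∃ F ∈ delPairFam H, CopyIn F.2 T) :
    G.edgeSet.ncard ≤ exNumFam l (delClassFam H) + 2 * l := by
  classical
  -- cardinality facts
  have hMfin : M.Finite := Set.toFinite M
  have hcardV : Fintype.card V = l + 2 := by
    have h1 : (Set.univ : Set V).ncard = Fintype.card V := by
      rw [Set.ncard_univ, Nat.card_eq_fintype_card]
    have hdisj : Disjoint M ({u, v} : Set V) := by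
      rw [Set.disjoint_right]
      rintro x (rfl | rfl) <;> assumption
    have h2 : (M ∪ ({u, v} : Set V)).ncard = l + 2 := by
      rw [Set.ncard_union_eq hdisj hMfin (Set.toFinite _), hMl, Set.ncard_pair huv]
    rw [← h1, hV, h2]
  have hcardM : Fintype.card M = l := by
    rw [← Nat.card_eq_fintype_card, Nat.card_coe_set_eq, hMl]
  -- the graph T on Fin l isomorphic to G[M]
  obtain ⟨e⟩ : Nonempty (Fin l ≃ M) := ⟨(Fintype.equivFinOfCardEq hcardM).symm⟩
  set T : SimpleGraph (Fin l) := (G.induce M).comap e.toEmbedding with hT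
  have iso : T ≃g (G.induce M) := SimpleGraph.Iso.comap e (G.induce M)
  have hTfree : ∀ F ∈ delClassFam H, ¬ CopyIn F.2 T := by
    intro F hF hc
    exact hGM F hF (copyIn_of_iso iso hc)
  have hTcard : T.edgeSet.ncard = (G.induce M).edgeSet.ncard := by
    rw [← Nat.card_coe_set_eq, ← Nat.card_coe_set_eq]
    exact Nat.card_congr iso.mapEdgeSet
  -- e(G[M]) ≤ ex
  have hle : (G.induce M).edgeSet.ncard ≤ exNumFam l (delClassFam H) := by
    rw [← hTcard]
    exact le_csSup (bddAbove_exNumFam_set l (delClassFam H)) ⟨T, hTfree, rfl⟩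
  -- finset edge counting
  set EM : Finset (Sym2 V) :=
    (G.induce M).edgeFinset.image (Sym2.map (Subtype.val : M → V)) with hEM
  have hEMcard : EM.card = (G.induce M).edgeSet.ncard := by
    rw [hEM, Finset.card_image_of_injective _ (Sym2.map.injective Subtype.val_injective),
      Set.ncard_eq_toFinset_card']
    congr 1
  set IU : Finset (Sym2 V) := G.incidenceFinset u with hIU
  set IV : Finset (Sym2 V) := G.incidenceFinset v with hIV
  have hsub : G.edgeFinset ⊆ EM ∪ (IU ∪ IV) := by
    intro ed hed
    induction ed with
    | _ a b =>
      rw [mem_edgeFinset, G.mem_edgeSet] at hed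
      have hmem : ∀ x : V, x ∈ M ∪ ({u, v} : Set V) := by
        intro x; rw [← hV]; exact Set.mem_univ x
      by_cases ha : a ∈ M
      · by_cases hb : b ∈ M
        · refine Finset.mem_union_left _ ?_
          rw [hEM, Finset.mem_image]
          exact ⟨s(⟨a, ha⟩, ⟨b, hb⟩), by rw [mem_edgeFinset, mem_edgeSet]; exact hed, rfl⟩
        · refine Finset.mem_union_right _ ?_
          rcases hmem b with hb' | hb' | hb'
          · exact absurd hb' hb
          · subst hb'
            exact Finset.mem_union_left _ (by
              rw [hIU, mem_incidenceFinset]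
              exact ⟨G.mem_edgeSet.mpr hed, Sym2.mem_mk_right a b⟩)
          · simp only [Set.mem_singleton_iff] at hb'
            subst hb'
            exact Finset.mem_union_right _ (by
              rw [hIV, mem_incidenceFinset]
              exact ⟨G.mem_edgeSet.mpr hed, Sym2.mem_mk_right a b⟩)
      · refine Finset.mem_union_right _ ?_
        rcases hmem a with ha' | ha' | ha'
        · exact absurd ha' ha
        · subst ha'
          exact Finset.mem_union_left _ (by
            rw [hIU, mem_incidenceFinset]
            exact ⟨G.mem_edgeSet.mpr hed, Sym2.mem_mk_left a b⟩)
        · simp only [Set.mem_singleton_iff] at ha'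
          subst ha'
          exact Finset.mem_union_right _ (by
            rw [hIV, mem_incidenceFinset]
            exact ⟨G.mem_edgeSet.mpr hed, Sym2.mem_mk_left a b⟩)
  have hEGfin : G.edgeSet.ncard = G.edgeFinset.card := by
    rw [Set.ncard_eq_toFinset_card']
    congr 1
  have hmain : G.edgeFinset.card ≤ EM.card + (IU ∪ IV).card := by
    calc G.edgeFinset.card ≤ (EM ∪ (IU ∪ IV)).card := Finset.card_le_card hsub
    _ ≤ EM.card + (IU ∪ IV).card := Finset.card_union_le _ _
  have hIUcard : IU.card = G.degree u := G.card_incidenceFinset_eq_degree u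
  have hIVcard : IV.card = G.degree v := G.card_incidenceFinset_eq_degree v
  -- degree bounds
  have hdegu1 : G.degree u ≤ l + 1 := by
    have := G.degree_lt_card_verts u
    omega
  have hdegv1 : G.degree v ≤ l + 1 := by
    have := G.degree_lt_card_verts v
    omega
  have hmemV : ∀ x : V, x ∈ M ∪ ({u, v} : Set V) := by
    intro x; rw [← hV]; exact Set.mem_univ x
  -- if not adjacent to some vertex besides itself, degree ≤ l
  have hdeg_all : ∀ x : V, l + 1 ≤ G.degree x → ∀ w : V, w ≠ x → G.Adj x w := by
    intro x hx
    by_contra hcon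
    push_neg at hcon
    obtain ⟨w, hwx, hnadj⟩ := hcon
    have hsub' : G.neighborFinset x ⊆ (Finset.univ.erase x).erase w := by
      intro n hn
      rw [mem_neighborFinset] at hn
      refine Finset.mem_erase.mpr ⟨?_, Finset.mem_erase.mpr ⟨(G.ne_of_adj hn.symm), Finset.mem_univ n⟩⟩
      rintro rfl
      exact hnadj hn
    have hc1 : (Finset.univ.erase x : Finset V).card = l + 1 := by
      rw [Finset.card_erase_of_mem (Finset.mem_univ x), Finset.card_univ, hcardV]
      omega
    have hc2 : ((Finset.univ.erase x).erase w : Finset V).card = l := by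
      rw [Finset.card_erase_of_mem (Finset.mem_erase.mpr ⟨hwx, Finset.mem_univ w⟩), hc1]
      omega
    have := Finset.card_le_card hsub'
    rw [← card_neighborFinset_eq_degree] at hx
    omega
  by_cases hadj : G.Adj u v
  · -- u,v adjacent : s(u,v) counted twice
    have hinter : s(u, v) ∈ IU ∩ IV := by
      rw [Finset.mem_inter, hIU, hIV, mem_incidenceFinset, mem_incidenceFinset]
      exact ⟨⟨G.mem_edgeSet.mpr hadj, Sym2.mem_mk_left u v⟩,
        ⟨G.mem_edgeSet.mpr hadj, Sym2.mem_mk_right u v⟩⟩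
    have hcui : (IU ∪ IV).card + 1 ≤ G.degree u + G.degree v := by
      have h1 : 1 ≤ (IU ∩ IV).card := Finset.card_pos.mpr ⟨_, hinter⟩
      have h2 := Finset.card_union_add_card_inter IU IV
      omega
    rcases lt_or_eq_of_le hle with hlt | heq
    · rw [hEGfin]; omega
    · -- extremal case
      by_cases hdu : G.degree u ≤ l
      · rw [hEGfin]; omega
      by_cases hdv : G.degree v ≤ l
      · rw [hEGfin]; omega
      -- u and v adjacent to everything: build a copy of H
      exfalso
      have hallu : ∀ w : V, w ≠ u → G.Adj u w := hdeg_all u (by omega)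
      have hallv : ∀ w : V, w ≠ v → G.Adj v w := hdeg_all v (by omega)
      obtain ⟨F, hF, hcopy⟩ := hext T hTfree (by rw [hTcard, heq])
      obtain ⟨x, y, hxy, rfl⟩ := hF
      have hcopy' : CopyIn (H.induce {w : W | w ≠ x ∧ w ≠ y}) (G.induce M) :=
        copyIn_of_iso iso hcopy
      obtain ⟨f, hf⟩ := hcopy'
      -- define the embedding of H into G
      set g : W → V := fun w =>
        if hx : w = x then u else if hy : w = y then v
        else ((f ⟨w, hx, hy⟩ : M) : V) with hg
      have hgx : g x = u := by simp [hg]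
      have hgy : g y = v := by
        have : y ≠ x := fun h => (H.ne_of_adj hxy) h.symm
        simp [hg, this]
      have hgother : ∀ w (hx : w ≠ x) (hy : w ≠ y), g w = ((f ⟨w, hx, hy⟩ : M) : V) := by
        intro w hx hy; simp [hg, hx, hy]
      have hgmem : ∀ w (hx : w ≠ x) (hy : w ≠ y), g w ∈ M := by
        intro w hx hy; rw [hgother w hx hy]; exact (f ⟨w, hx, hy⟩).2
      have hxyne : x ≠ y := H.ne_of_adj hxy
      have hginj : Function.Injective g := by
        intro a b hab
        by_cases hax : a = x
        · by_cases hbx : b = x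
          · rw [hax, hbx]
          · by_cases hby : b = y
            · exfalso; rw [hax, hby, hgx, hgy] at hab; exact huv hab
            · exfalso; rw [hax, hgx, hgother b hbx hby] at hab
              exact hu (by rw [hab]; exact (f ⟨b, hbx, hby⟩).2)
        · by_cases hay : a = y
          · by_cases hby : b = y
            · rw [hay, hby]
            · by_cases hbx : b = x
              · exfalso; rw [hay, hbx, hgy, hgx] at hab; exact huv hab.symm
              · exfalso; rw [hay, hgy, hgother b hbx hby] at hab
                exact hv (by rw [hab]; exact (f ⟨b, hbx, hby⟩).2)
          · by_cases hbx : b = x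
            · exfalso; rw [hbx, hgx, hgother a hax hay] at hab
              exact hu (by rw [← hab]; exact (f ⟨a, hax, hay⟩).2)
            · by_cases hby : b = y
              · exfalso; rw [hby, hgy, hgother a hax hay] at hab
                exact hv (by rw [← hab]; exact (f ⟨a, hax, hay⟩).2)
              · rw [hgother a hax hay, hgother b hbx hby] at hab
                exact congrArg Subtype.val (f.injective (Subtype.val_injective hab))
      have hgmemne : ∀ w (hxw : w ≠ x) (hyw : w ≠ y), g w ≠ u ∧ g w ≠ v := by
        intro w hxw hyw
        have := hgmem w hxw hyw
        exact ⟨fun h => hu (h ▸ this), fun h => hv (h ▸ this)⟩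
      have hgadj : ∀ a b, H.Adj a b → G.Adj (g a) (g b) := by
        intro a b hab
        have hne : a ≠ b := H.ne_of_adj hab
        by_cases hax : a = x
        · by_cases hbx : b = x
          · exact absurd (hax.trans hbx.symm) hne
          · by_cases hby : b = y
            · rw [hax, hby, hgx, hgy]; exact hadj
            · rw [hax, hgx]; exact hallu _ (hgmemne b hbx hby).1
        · by_cases hay : a = y
          · by_cases hby : b = y
            · exact absurd (hay.trans hby.symm) hne
            · by_cases hbx : b = x
              · rw [hay, hbx, hgy, hgx]; exact hadj.symm
              · rw [hay, hgy]; exact hallv _ (hgmemne b hbx hby).2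
          · by_cases hbx : b = x
            · rw [hbx, hgx]; exact (hallu _ (hgmemne a hax hay).1).symm
            · by_cases hby : b = y
              · rw [hby, hgy]; exact (hallv _ (hgmemne a hax hay).2).symm
              · rw [hgother a hax hay, hgother b hbx hby]
                exact hf ⟨a, hax, hay⟩ ⟨b, hbx, hby⟩ hab
      exact hGH ⟨⟨g, hginj⟩, hgadj⟩
  · -- u,v not adjacent : both degrees ≤ l
    have hnbru : G.neighborFinset u ⊆ hMfin.toFinset := by
      intro n hn
      rw [mem_neighborFinset] at hn
      rw [Set.Finite.mem_toFinset]
      rcases hmemV n with h | h | h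
      · exact h
      · exact absurd h (G.ne_of_adj hn.symm)
      · simp only [Set.mem_singleton_iff] at h
        exact absurd (h ▸ hn) hadj
    have hnbrv : G.neighborFinset v ⊆ hMfin.toFinset := by
      intro n hn
      rw [mem_neighborFinset] at hn
      rw [Set.Finite.mem_toFinset]
      rcases hmemV n with h | h | h
      · exact h
      · exact absurd (h ▸ hn).symm hadj
      · simp only [Set.mem_singleton_iff] at h
        exact absurd h (G.ne_of_adj hn.symm)
    have hMfcard : hMfin.toFinset.card = l := by
      rw [← Set.ncard_eq_toFinset_card _ hMfin, hMl]
    have hdu : G.degree u ≤ l := by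
      rw [← card_neighborFinset_eq_degree, ← hMfcard]
      exact Finset.card_le_card hnbru
    have hdv : G.degree v ≤ l := by
      rw [← card_neighborFinset_eq_degree, ← hMfcard]
      exact Finset.card_le_card hnbrv
    have hcui : (IU ∪ IV).card ≤ G.degree u + G.degree v := by
      have := Finset.card_union_le IU IV
      omega
    rw [hEGfin]
    omega
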